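/- Abstraction elimination: for every term t over variables (terms extended with a variable constructor var : V → Term) and every variable v, there exists a term A (the 'bracket abstraction' [v]t) not containing v such that A x ⟶* t[v := x] for every closed term x, where A is built by the rules [v]v = S K K, [v]u = K u when v does not occur in u, and [v](a b) = S ([v]a) ([v]b). -/

import Mathlib

inductive Term (V : Type) : Type
  | S : Term V
  | K : Term V
  | var : V → Term V
  | app : Term V → Term V → Term V

variable {V : Type} [DecidableEq V]

def occurs (v : V) : Term V → Bool
  | .S => false
  | .K => false
  | .var w => v = w
  | .app a b => occurs v a || occurs v b

def SKK {V : Type} : Term V := .app (.app .S .K) .K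

def babs (v : V) : Term V → Term V
  | .S => .app .K .S
  | .K => .app .K .K
  | .var w => if v = w then SKK else .app .K (.var w)
  | .app a b =>
      if occurs v (.app a b) then .app (.app .S (babs v a)) (babs v b)
      else .app .K (.app a b)

def subst (v : V) (x : Term V) : Term V → Term V
  | .S => .S
  | .K => .K
  | .var w => if v = w then x else .var w
  | .app a b => .app (subst v x a) (subst v x b)

def Closed (t : Term V) : Prop := ∀ v : V, occurs v t = false

inductive Step : Term V → Term V → Prop
  | Srule (a b c : Term V) :
      Step (.app (.app (.app .S a) b) c) (.app (.app a c) (.app b c))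
  | Krule (a b : Term V) : Step (.app (.app .K a) b) a
  | appL {a a' : Term V} (b : Term V) : Step a a' → Step (.app a b) (.app a' b)
  | appR (a : Term V) {b b' : Term V} : Step b b' → Step (.app a b) (.app a b')

def Reds : Term V → Term V → Prop := Relation.ReflTransGen Step

lemma subst_of_not_occurs (v : V) (x : Term V) {t : Term V} (h : occurs v t = false) :
    subst v x t = t := by
  induction t with
  | S => rfl
  | K => rfl
  | var w =>
      simp [occurs, decide_eq_false_iff_not] at h
      simp [subst, h]
  | app a b iha ihb =>
      simp [occurs] at h
      simp [subst, iha h.1, ihb h.2]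

lemma occurs_babs (v : V) (t : Term V) : occurs v (babs v t) = false := by
  induction t with
  | S => simp [babs, occurs]
  | K => simp [babs, occurs]
  | var w =>
      by_cases h : v = w
      · simp [babs, h, SKK, occurs]
      · simp [babs, h, occurs, decide_eq_false_iff_not]
  | app a b iha ihb =>
      by_cases h : occurs v (Term.app a b) = true
      · simp only [occurs, Bool.or_eq_true] at h
        simp [babs, occurs, h, iha, ihb]
      · simp only [Bool.not_eq_true, occurs, Bool.or_eq_false_iff] at h
        simp [babs, occurs, h.1, h.2]

lemma Reds.appL {a a' : Term V} (b : Term V) (h : Reds a a') :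
    Reds (.app a b) (.app a' b) :=
  Relation.ReflTransGen.lift (fun t => Term.app t b) (fun _ _ s => Step.appL b s) _ _ h

lemma Reds.appR (a : Term V) {b b' : Term V} (h : Reds b b') :
    Reds (.app a b) (.app a b') :=
  Relation.ReflTransGen.lift (fun t => Term.app a t) (fun _ _ s => Step.appR a s) _ _ h

theorem abstraction_elimination (t : Term V) (v : V) :
    ∃ A : Term V, A = babs v t ∧ occurs v A = false ∧
      ∀ x : Term V, Closed x → Reds (.app A x) (subst v x t) := by
  refine ⟨babs v t, rfl, occurs_babs v t, ?_⟩
  induction t with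
  | S => intro x _; exact Relation.ReflTransGen.single (Step.Krule _ _)
  | K => intro x _; exact Relation.ReflTransGen.single (Step.Krule _ _)
  | var w =>
      intro x _
      by_cases h : v = w
      · simp only [babs, h, if_pos rfl, subst, SKK]
        exact Relation.ReflTransGen.trans
          (Relation.ReflTransGen.single (Step.Srule _ _ _))
          (Relation.ReflTransGen.single (Step.Krule _ _))
      · simp only [babs, if_neg h, subst, if_neg h]
        exact Relation.ReflTransGen.single (Step.Krule _ _)
  | app a b iha ihb =>
      intro x hx
      by_cases h : occurs v (Term.app a b) = true
      · simp only [babs, if_pos h, subst]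
        refine Relation.ReflTransGen.head (Step.Srule _ _ _) ?_
        exact Relation.ReflTransGen.trans (Reds.appL _ (iha x hx)) (Reds.appR _ (ihb x hx))
      · simp only [Bool.not_eq_true] at h
        have h' := h
        simp only [occurs, Bool.or_eq_false_iff] at h'
        simp only [babs, occurs, h'.1, h'.2]
        rw [subst, subst_of_not_occurs v x h'.1, subst_of_not_occurs v x h'.2]
        exact Relation.ReflTransGen.single (Step.Krule _ _)
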